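/- Every solution of the four-body system in the center-of-mass frame satisfies r₃(t) = r₁(t + π/ω) and r₄(t) = r₂(t + π/ω) for all t ∈ ℝ; that is, the most general center-of-mass motion consists of two two-body choreographies: bodies 1 and 3 traverse one common closed curve with time delay 2τ = π/ω, and bodies 2 and 4 traverse another common closed curve with the same time delay. -/

import Mathlib

noncomputable section

/-- The Euclidean plane. -/
abbrev Plane : Type := EuclideanSpace ℝ (Fin 2)

/-- A solution of the planar four-body system with pairwise quadratic potential
`V = (mω²/4)(2‖r₁−r₂‖² + 2‖r₂−r₃‖² + 2‖r₃−r₄‖² + 2‖r₁−r₄‖² − ‖r₁−r₃‖² − ‖r₂−r₄‖²)`: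
four twice differentiable curves satisfying Newton's equations
`rᵢ'' = −ω²((rᵢ − r_{i+1}) + (rᵢ − r_{i−1}) − ½(rᵢ − r_{i+2}))` (indices mod 4). -/
def IsFourBodySolution (ω : ℝ) (r₁ r₂ r₃ r₄ : ℝ → Plane) : Prop :=
  (Differentiable ℝ r₁ ∧ Differentiable ℝ (deriv r₁)) ∧
  (Differentiable ℝ r₂ ∧ Differentiable ℝ (deriv r₂)) ∧
  (Differentiable ℝ r₃ ∧ Differentiable ℝ (deriv r₃)) ∧
  (Differentiable ℝ r₄ ∧ Differentiable ℝ (deriv r₄)) ∧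
  (∀ t : ℝ, deriv (deriv r₁) t =
    (-(ω ^ 2)) • ((r₁ t - r₂ t) + (r₁ t - r₄ t) - (1 / 2 : ℝ) • (r₁ t - r₃ t))) ∧
  (∀ t : ℝ, deriv (deriv r₂) t =
    (-(ω ^ 2)) • ((r₂ t - r₃ t) + (r₂ t - r₁ t) - (1 / 2 : ℝ) • (r₂ t - r₄ t))) ∧
  (∀ t : ℝ, deriv (deriv r₃) t =
    (-(ω ^ 2)) • ((r₃ t - r₄ t) + (r₃ t - r₂ t) - (1 / 2 : ℝ) • (r₃ t - r₁ t))) ∧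
  (∀ t : ℝ, deriv (deriv r₄) t =
    (-(ω ^ 2)) • ((r₄ t - r₁ t) + (r₄ t - r₃ t) - (1 / 2 : ℝ) • (r₄ t - r₂ t)))

/-- Second derivative of a difference of twice differentiable plane curves. -/
private lemma twice_sub (f g : ℝ → Plane) (hf : Differentiable ℝ f)
    (hf' : Differentiable ℝ (deriv f)) (hg : Differentiable ℝ g)
    (hg' : Differentiable ℝ (deriv g)) :
    Differentiable ℝ (fun t => f t - g t) ∧
      Differentiable ℝ (deriv (fun t => f t - g t)) ∧
      ∀ t, deriv (deriv (fun t => f t - g t)) t = deriv (deriv f) t - deriv (deriv g) t := by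
  have h1 : deriv (fun t => f t - g t) = fun t => deriv f t - deriv g t :=
    funext fun t => deriv_sub (hf t) (hg t)
  refine ⟨hf.sub hg, ?_, ?_⟩
  · rw [h1]; exact hf'.sub hg'
  · intro t; rw [h1]; exact deriv_sub (hf' t) (hg' t)

/-- Second derivative of a sum of twice differentiable plane curves. -/
private lemma twice_add (f g : ℝ → Plane) (hf : Differentiable ℝ f)
    (hf' : Differentiable ℝ (deriv f)) (hg : Differentiable ℝ g)
    (hg' : Differentiable ℝ (deriv g)) :
    Differentiable ℝ (fun t => f t + g t) ∧
      Differentiable ℝ (deriv (fun t => f t + g t)) ∧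
      ∀ t, deriv (deriv (fun t => f t + g t)) t = deriv (deriv f) t + deriv (deriv g) t := by
  have h1 : deriv (fun t => f t + g t) = fun t => deriv f t + deriv g t :=
    funext fun t => deriv_add (hf t) (hg t)
  refine ⟨hf.add hg, ?_, ?_⟩
  · rw [h1]; exact hf'.add hg'
  · intro t; rw [h1]; exact deriv_add (hf' t) (hg' t)

/-- Second derivative of a sum of four twice differentiable plane curves. -/
private lemma twice_add4 (f1 f2 f3 f4 : ℝ → Plane)
    (h1 : Differentiable ℝ f1) (h1' : Differentiable ℝ (deriv f1))
    (h2 : Differentiable ℝ f2) (h2' : Differentiable ℝ (deriv f2))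
    (h3 : Differentiable ℝ f3) (h3' : Differentiable ℝ (deriv f3))
    (h4 : Differentiable ℝ f4) (h4' : Differentiable ℝ (deriv f4)) :
    Differentiable ℝ (fun t => f1 t + f2 t + f3 t + f4 t) ∧
      (deriv (fun t => f1 t + f2 t + f3 t + f4 t)
        = fun t => deriv f1 t + deriv f2 t + deriv f3 t + deriv f4 t) ∧
      Differentiable ℝ (deriv (fun t => f1 t + f2 t + f3 t + f4 t)) ∧
      ∀ t, deriv (deriv (fun t => f1 t + f2 t + f3 t + f4 t)) t
        = deriv (deriv f1) t + deriv (deriv f2) t + deriv (deriv f3) t + deriv (deriv f4) t := by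
  have key : ∀ (g1 g2 g3 g4 : ℝ → Plane), Differentiable ℝ g1 → Differentiable ℝ g2 →
      Differentiable ℝ g3 → Differentiable ℝ g4 →
      deriv (fun t => g1 t + g2 t + g3 t + g4 t)
        = fun t => deriv g1 t + deriv g2 t + deriv g3 t + deriv g4 t := by
    intro g1 g2 g3 g4 hg1 hg2 hg3 hg4
    funext t
    rw [deriv_fun_add (f := fun y => g1 y + g2 y + g3 y) (((hg1 t).add (hg2 t)).add (hg3 t)) (hg4 t),
      deriv_fun_add (f := fun y => g1 y + g2 y) ((hg1 t).add (hg2 t)) (hg3 t), deriv_fun_add (hg1 t) (hg2 t)]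
  have hd := key f1 f2 f3 f4 h1 h2 h3 h4
  refine ⟨((h1.add h2).add h3).add h4, hd, ?_, ?_⟩
  · rw [hd]; exact ((h1'.add h2').add h3').add h4'
  · intro t
    rw [hd]
    rw [deriv_fun_add (f := fun y => deriv f1 y + deriv f2 y + deriv f3 y)
        (((h1' t).add (h2' t)).add (h3' t)) (h4' t),
      deriv_fun_add (f := fun y => deriv f1 y + deriv f2 y) ((h1' t).add (h2' t)) (h3' t), deriv_fun_add (h1' t) (h2' t)]

/-- Uniqueness for the harmonic oscillator equation `f'' = -c² f` with zero initial data,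
proved via conservation of the energy `c²⟪f,f⟫ + ⟪f',f'⟫`. -/
private lemma zero_of_osc (c : ℝ) (f : ℝ → Plane) (hf : Differentiable ℝ f)
    (hf' : Differentiable ℝ (deriv f))
    (hode : ∀ t, deriv (deriv f) t = (-(c ^ 2)) • f t)
    (h0 : f 0 = 0) (h0' : deriv f 0 = 0) : ∀ t, f t = 0 := by
  have hE : ∀ s : ℝ, HasDerivAt
      (fun u => (c ^ 2 * inner ℝ (f u) (f u) + inner ℝ (deriv f u) (deriv f u) : ℝ)) 0 s := by
    intro s
    have h1 : HasDerivAt f (deriv f s) s := (hf s).hasDerivAt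
    have h2 : HasDerivAt (deriv f) (deriv (deriv f) s) s := (hf' s).hasDerivAt
    have d1 := (h1.inner ℝ h1).const_mul (c ^ 2)
    have d2 := h2.inner ℝ h2
    have d := d1.add d2
    convert d using 1
    · rfl
    · rfl
    · rfl
    rw [hode s]
    simp only [real_inner_smul_left, real_inner_smul_right]
    rw [real_inner_comm (deriv f s) (f s)]
    ring
  have hEconst : ∀ t : ℝ,
      (c ^ 2 * inner ℝ (f t) (f t) + inner ℝ (deriv f t) (deriv f t) : ℝ) = 0 := by
    intro t
    have := is_const_of_deriv_eq_zero (f := fun u =>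
        (c ^ 2 * inner ℝ (f u) (f u) + inner ℝ (deriv f u) (deriv f u) : ℝ))
      (fun s => (hE s).differentiableAt) (fun s => (hE s).deriv) t 0
    rw [this, h0, h0']
    simp
  have hd0 : ∀ t, deriv f t = 0 := by
    intro t
    have h1 : (0:ℝ) ≤ c ^ 2 * inner ℝ (f t) (f t) :=
      mul_nonneg (sq_nonneg c) real_inner_self_nonneg
    have h2 : (0:ℝ) ≤ inner ℝ (deriv f t) (deriv f t) := real_inner_self_nonneg
    have h3 : (inner ℝ (deriv f t) (deriv f t) : ℝ) = 0 := by linarith [hEconst t]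
    exact inner_self_eq_zero.mp h3
  intro t
  rw [← h0]
  exact is_const_of_deriv_eq_zero hf hd0 t 0

/-- Explicit solution of the harmonic oscillator equation `f'' = -c² f`. -/
private lemma osc_formula (c : ℝ) (hc : c ≠ 0) (f : ℝ → Plane)
    (hf : Differentiable ℝ f) (hf' : Differentiable ℝ (deriv f))
    (hode : ∀ t, deriv (deriv f) t = (-(c ^ 2)) • f t) (t : ℝ) :
    f t = Real.cos (c * t) • f 0 + (Real.sin (c * t) / c) • deriv f 0 := by
  have hct : ∀ s : ℝ, HasDerivAt (fun u : ℝ => c * u) c s := by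
    intro s
    simpa using (hasDerivAt_id s).const_mul c
  have hcos : ∀ s : ℝ, HasDerivAt (fun u : ℝ => Real.cos (c * u)) (-Real.sin (c * s) * c) s :=
    fun s => (Real.hasDerivAt_cos (c * s)).comp s (hct s)
  have hsin : ∀ s : ℝ, HasDerivAt (fun u : ℝ => Real.sin (c * u)) (Real.cos (c * s) * c) s :=
    fun s => (Real.hasDerivAt_sin (c * s)).comp s (hct s)
  have hP : ∀ s : ℝ, HasDerivAt
      (fun u : ℝ => Real.cos (c * u) • f 0 + (Real.sin (c * u) / c) • deriv f 0)
      ((-Real.sin (c * s) * c) • f 0 + (Real.cos (c * s) * c / c) • deriv f 0) s :=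
    fun s => ((hcos s).smul_const (f 0)).add (((hsin s).div_const c).smul_const (deriv f 0))
  have hP' : ∀ s : ℝ, HasDerivAt
      (fun u : ℝ => (-Real.sin (c * u) * c) • f 0 + (Real.cos (c * u) * c / c) • deriv f 0)
      ((-(Real.cos (c * s) * c) * c) • f 0 + (-Real.sin (c * s) * c * c / c) • deriv f 0) s :=
    fun s => ((((hsin s).neg).mul_const c).smul_const (f 0)).add
      ((((hcos s).mul_const c).div_const c).smul_const (deriv f 0))
  set g : ℝ → Plane :=
    fun u => f u - (Real.cos (c * u) • f 0 + (Real.sin (c * u) / c) • deriv f 0) with hg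
  have hgdiff : Differentiable ℝ g := hf.sub fun s => (hP s).differentiableAt
  have hgd : deriv g = fun s => deriv f s -
      ((-Real.sin (c * s) * c) • f 0 + (Real.cos (c * s) * c / c) • deriv f 0) := by
    funext s
    rw [hg, deriv_fun_sub (hf s) (hP s).differentiableAt, (hP s).deriv]
  have hgd' : Differentiable ℝ (deriv g) := by
    rw [hgd]; exact hf'.sub fun s => (hP' s).differentiableAt
  have hgode : ∀ s, deriv (deriv g) s = (-(c ^ 2)) • g s := by
    intro s
    rw [hgd, deriv_fun_sub (hf' s) (hP' s).differentiableAt, (hP' s).deriv, hode s, hg]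
    match_scalars <;> field_simp <;> ring
  have hg0 : g 0 = 0 := by simp [hg]
  have hg0' : deriv g 0 = 0 := by
    rw [hgd]
    simp [hc]
  have hz := zero_of_osc c g hgdiff hgd' hgode hg0 hg0' t
  rw [hg] at hz
  simpa [sub_eq_zero] using hz

/-- From anti-periodicity of the difference and periodicity of the sum,
conclude the choreography relation. -/
private lemma combine {x y x' y' : Plane} (h1 : x' - y' = -(x - y)) (h2 : x' + y' = x + y) :
    y = x' := by
  have key : y = (2:ℝ)⁻¹ • ((x + y) + -(x - y)) := by module
  rw [key, ← h2, ← h1]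
  module

/-- In the center-of-mass frame, every solution consists of two two-body
choreographies: bodies 1,3 share a common curve with delay `2τ = π/ω`, as do bodies 2,4. -/
theorem two_two_body_choreographies (m ω : ℝ) (hm : 0 < m) (hω : 0 < ω)
    (r₁ r₂ r₃ r₄ : ℝ → Plane)
    (hsol : IsFourBodySolution ω r₁ r₂ r₃ r₄)
    (hcomr : r₁ 0 + r₂ 0 + r₃ 0 + r₄ 0 = 0)
    (hcomp : m • deriv r₁ 0 + m • deriv r₂ 0 + m • deriv r₃ 0 + m • deriv r₄ 0 = 0) :
    ∀ t : ℝ, r₃ t = r₁ (t + Real.pi / ω) ∧ r₄ t = r₂ (t + Real.pi / ω) := by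
  obtain ⟨⟨hd1, hd1'⟩, ⟨hd2, hd2'⟩, ⟨hd3, hd3'⟩, ⟨hd4, hd4'⟩, he1, he2, he3, he4⟩ := hsol
  have hωne : ω ≠ 0 := ne_of_gt hω
  have h2ωne : 2 * ω ≠ 0 := by positivity
  -- the center of mass vanishes identically
  obtain ⟨hs1, hsd, hs2, hs3⟩ := twice_add4 r₁ r₂ r₃ r₄ hd1 hd1' hd2 hd2' hd3 hd3' hd4 hd4'
  have hode_s : ∀ t, deriv (deriv (fun t => r₁ t + r₂ t + r₃ t + r₄ t)) t
      = (-((0:ℝ) ^ 2)) • (r₁ t + r₂ t + r₃ t + r₄ t) := by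
    intro t
    rw [hs3 t, he1 t, he2 t, he3 t, he4 t]
    module
  have hS0' : deriv (fun t => r₁ t + r₂ t + r₃ t + r₄ t) 0 = 0 := by
    rw [hsd]
    have h := hcomp
    rw [← smul_add, ← smul_add, ← smul_add] at h
    have := (smul_eq_zero.mp h).resolve_left (ne_of_gt hm)
    simpa using this
  have hs0 : ∀ t, r₁ t + r₂ t + r₃ t + r₄ t = 0 := fun t =>
    zero_of_osc 0 (fun t => r₁ t + r₂ t + r₃ t + r₄ t) hs1 hs2 hode_s hcomr hS0' t
  -- a = r₁ - r₃ oscillates with frequency ω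
  obtain ⟨ha1, ha2, ha3⟩ := twice_sub r₁ r₃ hd1 hd1' hd3 hd3'
  have hode_a : ∀ t, deriv (deriv (fun t => r₁ t - r₃ t)) t = (-(ω ^ 2)) • (r₁ t - r₃ t) := by
    intro t
    rw [ha3 t, he1 t, he3 t]
    module
  -- b = r₂ - r₄ oscillates with frequency ω
  obtain ⟨hb1, hb2, hb3⟩ := twice_sub r₂ r₄ hd2 hd2' hd4 hd4'
  have hode_b : ∀ t, deriv (deriv (fun t => r₂ t - r₄ t)) t = (-(ω ^ 2)) • (r₂ t - r₄ t) := by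
    intro t
    rw [hb3 t, he2 t, he4 t]
    module
  -- u = r₁ + r₃ oscillates with frequency 2ω
  obtain ⟨hu1, hu2, hu3⟩ := twice_add r₁ r₃ hd1 hd1' hd3 hd3'
  have hode_u : ∀ t, deriv (deriv (fun t => r₁ t + r₃ t)) t
      = (-((2 * ω) ^ 2)) • (r₁ t + r₃ t) := by
    intro t
    rw [hu3 t, he1 t, he3 t]
    have h4 : r₄ t = -(r₁ t + r₂ t + r₃ t) := eq_neg_of_add_eq_zero_right (hs0 t)
    rw [h4]
    module
  -- the shifts
  have harg1 : ∀ t : ℝ, ω * (t + Real.pi / ω) = ω * t + Real.pi := by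
    intro t; field_simp
  have harg2 : ∀ t : ℝ, 2 * ω * (t + Real.pi / ω) = 2 * ω * t + 2 * Real.pi := by
    intro t; field_simp
  have ha_shift : ∀ t, r₁ (t + Real.pi / ω) - r₃ (t + Real.pi / ω) = -(r₁ t - r₃ t) := by
    intro t
    have h1 := osc_formula ω hωne (fun t => r₁ t - r₃ t) ha1 ha2 hode_a (t + Real.pi / ω)
    have h2 := osc_formula ω hωne (fun t => r₁ t - r₃ t) ha1 ha2 hode_a t
    rw [h1, h2, harg1 t, Real.cos_add_pi, Real.sin_add_pi]
    module
  have hb_shift : ∀ t, r₂ (t + Real.pi / ω) - r₄ (t + Real.pi / ω) = -(r₂ t - r₄ t) := by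
    intro t
    have h1 := osc_formula ω hωne (fun t => r₂ t - r₄ t) hb1 hb2 hode_b (t + Real.pi / ω)
    have h2 := osc_formula ω hωne (fun t => r₂ t - r₄ t) hb1 hb2 hode_b t
    rw [h1, h2, harg1 t, Real.cos_add_pi, Real.sin_add_pi]
    module
  have hu_shift : ∀ t, r₁ (t + Real.pi / ω) + r₃ (t + Real.pi / ω) = r₁ t + r₃ t := by
    intro t
    have h1 := osc_formula (2 * ω) h2ωne (fun t => r₁ t + r₃ t) hu1 hu2 hode_u (t + Real.pi / ω)
    have h2 := osc_formula (2 * ω) h2ωne (fun t => r₁ t + r₃ t) hu1 hu2 hode_u t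
    rw [h1, h2, harg2 t, Real.cos_add_two_pi, Real.sin_add_two_pi]
  have hvt : ∀ t, r₂ t + r₄ t = -(r₁ t + r₃ t) := by
    intro t
    apply eq_neg_of_add_eq_zero_left
    rw [← hs0 t]
    abel
  have hv_shift : ∀ t, r₂ (t + Real.pi / ω) + r₄ (t + Real.pi / ω) = r₂ t + r₄ t := by
    intro t
    rw [hvt, hvt, hu_shift t]
  intro t
  exact ⟨combine (ha_shift t) (hu_shift t), combine (hb_shift t) (hv_shift t)⟩
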